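/- Let (Y^X, ε_Y) be a weak (respectively strong) homotopy exponential for X and Y in a path category C, and let h : Y → Z be a weak equivalence. Then (Y^X, h ∘ ε_Y) is a weak (respectively strong) homotopy exponential for X and Z. -/

import Mathlib

open CategoryTheory

universe v u

/-- A path category (category of fibrant objects in the sense of Van den Berg–Moerdijk),
with chosen pullbacks along fibrations and chosen path objects. -/
class PathCat (C : Type u) [Category.{v} C] where
  /-- the class of fibrations -/
  Fib : ∀ {X Y : C}, (X ⟶ Y) → Prop
  /-- the class of weak equivalences -/
  Weq : ∀ {X Y : C}, (X ⟶ Y) → Prop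
  /-- fibrations are closed under composition -/
  fib_comp : ∀ {X Y Z : C} {f : X ⟶ Y} {g : Y ⟶ Z}, Fib f → Fib g → Fib (f ≫ g)
  /-- chosen pullback of a fibration `g` along `f` -/
  pb : ∀ {X Y Z : C} (f : X ⟶ Z) (g : Y ⟶ Z), Fib g → C
  pb₁ : ∀ {X Y Z : C} (f : X ⟶ Z) (g : Y ⟶ Z) (hg : Fib g), pb f g hg ⟶ X
  pb₂ : ∀ {X Y Z : C} (f : X ⟶ Z) (g : Y ⟶ Z) (hg : Fib g), pb f g hg ⟶ Y
  pb_comm : ∀ {X Y Z : C} (f : X ⟶ Z) (g : Y ⟶ Z) (hg : Fib g),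
    pb₁ f g hg ≫ f = pb₂ f g hg ≫ g
  /-- the pullback of a fibration is a fibration -/
  pb_fib : ∀ {X Y Z : C} (f : X ⟶ Z) (g : Y ⟶ Z) (hg : Fib g), Fib (pb₁ f g hg)
  pb_lift : ∀ {X Y Z T : C} (f : X ⟶ Z) (g : Y ⟶ Z) (hg : Fib g)
    (a : T ⟶ X) (b : T ⟶ Y), a ≫ f = b ≫ g → (T ⟶ pb f g hg)
  pb_lift₁ : ∀ {X Y Z T : C} (f : X ⟶ Z) (g : Y ⟶ Z) (hg : Fib g)
    (a : T ⟶ X) (b : T ⟶ Y) (w : a ≫ f = b ≫ g),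
    pb_lift f g hg a b w ≫ pb₁ f g hg = a
  pb_lift₂ : ∀ {X Y Z T : C} (f : X ⟶ Z) (g : Y ⟶ Z) (hg : Fib g)
    (a : T ⟶ X) (b : T ⟶ Y) (w : a ≫ f = b ≫ g),
    pb_lift f g hg a b w ≫ pb₂ f g hg = b
  pb_lift_unique : ∀ {X Y Z T : C} (f : X ⟶ Z) (g : Y ⟶ Z) (hg : Fib g)
    (t t' : T ⟶ pb f g hg), t ≫ pb₁ f g hg = t' ≫ pb₁ f g hg →
    t ≫ pb₂ f g hg = t' ≫ pb₂ f g hg → t = t'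
  /-- the pullback of an acyclic fibration is an acyclic fibration -/
  pb_weq : ∀ {X Y Z : C} (f : X ⟶ Z) (g : Y ⟶ Z) (hg : Fib g), Weq g → Weq (pb₁ f g hg)
  /-- weak equivalences satisfy 2-out-of-6 -/
  two_of_six : ∀ {X Y Z W : C} (f : X ⟶ Y) (g : Y ⟶ Z) (h : Z ⟶ W),
    Weq (f ≫ g) → Weq (g ≫ h) → Weq f ∧ Weq g ∧ Weq h ∧ Weq (f ≫ g ≫ h)
  /-- isomorphisms are acyclic fibrations -/
  iso_fib : ∀ {X Y : C} (f : X ⟶ Y) [IsIso f], Fib f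
  iso_weq : ∀ {X Y : C} (f : X ⟶ Y) [IsIso f], Weq f
  /-- every acyclic fibration has a section -/
  acyc_section : ∀ {X Y : C} (f : X ⟶ Y), Fib f → Weq f → ∃ s : Y ⟶ X, s ≫ f = 𝟙 Y
  /-- terminal object; every object is fibrant -/
  term : C
  toTerm : ∀ X : C, X ⟶ term
  toTerm_unique : ∀ {X : C} (f : X ⟶ term), f = toTerm X
  toTerm_fib : ∀ X : C, Fib (toTerm X)
  /-- chosen path object of each object -/
  P : C → C
  pr : ∀ X : C, X ⟶ P X
  ps : ∀ X : C, P X ⟶ X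
  pt : ∀ X : C, P X ⟶ X
  pr_ps : ∀ X : C, pr X ≫ ps X = 𝟙 X
  pr_pt : ∀ X : C, pr X ≫ pt X = 𝟙 X
  pr_weq : ∀ X : C, Weq (pr X)
  /-- `(s,t) : PX ⟶ X × X` is a fibration -/
  pst_fib : ∀ X : C, Fib (pb_lift (toTerm X) (toTerm X) (toTerm_fib X) (ps X) (pt X)
    ((toTerm_unique _).trans (toTerm_unique _).symm))

namespace PathCat

variable {C : Type u} [Category.{v} C] [PathCat C]

/-- the chosen binary product `X × Y` -/
def prodObj (X Y : C) : C := pb (toTerm X) (toTerm Y) (toTerm_fib Y)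

def pfst (X Y : C) : prodObj X Y ⟶ X := pb₁ _ _ _

def psnd (X Y : C) : prodObj X Y ⟶ Y := pb₂ _ _ _

def plift {T X Y : C} (a : T ⟶ X) (b : T ⟶ Y) : T ⟶ prodObj X Y :=
  pb_lift _ _ _ a b ((toTerm_unique _).trans (toTerm_unique _).symm)

@[simp] lemma plift_fst {T X Y : C} (a : T ⟶ X) (b : T ⟶ Y) :
    plift a b ≫ pfst X Y = a := pb_lift₁ _ _ _ _ _ _

@[simp] lemma plift_snd {T X Y : C} (a : T ⟶ X) (b : T ⟶ Y) :
    plift a b ≫ psnd X Y = b := pb_lift₂ _ _ _ _ _ _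

/-- the product of two morphisms -/
def prodMap {X X' Y Y' : C} (f : X ⟶ X') (g : Y ⟶ Y') : prodObj X Y ⟶ prodObj X' Y' :=
  plift (pfst X Y ≫ f) (psnd X Y ≫ g)

/-- the map `(s,t) : PX ⟶ X × X` -/
def pst (X : C) : P X ⟶ prodObj X X := plift (ps X) (pt X)

lemma pstFib (X : C) : Fib (pst (C := C) X) := pst_fib X

/-- a (not necessarily chosen) path object for `Y` -/
structure PathObj (Y : C) where
  ob : C
  r : Y ⟶ ob
  s : ob ⟶ Y
  t : ob ⟶ Y
  rs : r ≫ s = 𝟙 Y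
  rt : r ≫ t = 𝟙 Y
  rweq : Weq r
  stfib : Fib (plift s t)

/-- homotopy witnessed by a given path object -/
def HomotopicVia {X Y : C} (Q : PathObj Y) (f g : X ⟶ Y) : Prop :=
  ∃ H : X ⟶ Q.ob, H ≫ Q.s = f ∧ H ≫ Q.t = g

/-- homotopy (via the chosen path object) -/
def Homotopic {X Y : C} (f g : X ⟶ Y) : Prop :=
  ∃ H : X ⟶ P Y, H ≫ ps Y = f ∧ H ≫ pt Y = g

/-- a fiberwise path object for a fibration `p : E ⟶ B` -/
structure FibPathObj {E B : C} (p : E ⟶ B) (hp : Fib p) where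
  ob : C
  r : E ⟶ ob
  s : ob ⟶ E
  t : ob ⟶ E
  rs : r ≫ s = 𝟙 E
  rt : r ≫ t = 𝟙 E
  sp : s ≫ p = t ≫ p
  rweq : Weq r
  stfib : Fib (pb_lift p p hp s t sp)

/-- fiberwise homotopy over the base of the fibration `p` -/
def FibHomotopic {E B T : C} (p : E ⟶ B) (hp : Fib p) (u v : T ⟶ E) : Prop :=
  ∃ Q : FibPathObj p hp, ∃ H : T ⟶ Q.ob, H ≫ Q.s = u ∧ H ≫ Q.t = v

/-- homotopies from `f` to `g` (witnesses via the chosen path object) -/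
def Htpy {X Y : C} (f g : X ⟶ Y) : Type v :=
  {H : X ⟶ P Y // H ≫ ps Y = f ∧ H ≫ pt Y = g}

/-- homotopy classes of homotopies: homotopies modulo fiberwise homotopy over `Y × Y`;
these are the arrows of the hom-groupoid `C(X,Y)`. -/
def HCls {X Y : C} (f g : X ⟶ Y) : Type v :=
  Quot (fun H K : Htpy f g => FibHomotopic (pst Y) (pstFib Y) H.1 K.1)

end PathCat

namespace PathCat

variable {C : Type u} [Category.{v} C] [PathCat C]

/-- Weak homotopy exponential: the functor `C(T, E) ⟶ C(T × X, Y)`, `v ↦ ε ∘ (v × 1)`,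
is essentially surjective for every `T`. -/
def IsWeakExp (X Y E : C) (ε : prodObj E X ⟶ Y) : Prop :=
  ∀ (T : C) (u : prodObj T X ⟶ Y), ∃ v : T ⟶ E, Homotopic (prodMap v (𝟙 X) ≫ ε) u

/-- Fullness of the functor `C(T, E) ⟶ C(T × X, Y)`: every homotopy between images is,
up to fiberwise homotopy, the image of a homotopy (the image on homotopies being
computed via any comparison filler `θ : PE × PX ⟶ P(E × X)` and any filler `Pε`). -/
def ExpFull (X Y E : C) (ε : prodObj E X ⟶ Y) : Prop :=
  ∀ (T : C)
    (θ : prodObj (P E) (P X) ⟶ P (prodObj E X))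
    (θs : θ ≫ ps (prodObj E X) = prodMap (ps E) (ps X))
    (θt : θ ≫ pt (prodObj E X) = prodMap (pt E) (pt X))
    (θr : FibHomotopic (pst (prodObj E X)) (pstFib (prodObj E X))
      (prodMap (pr E) (pr X) ≫ θ) (pr (prodObj E X)))
    (Pε : P (prodObj E X) ⟶ P Y)
    (Pεs : Pε ≫ ps Y = ps (prodObj E X) ≫ ε) (Pεt : Pε ≫ pt Y = pt (prodObj E X) ≫ ε)
    (Pεr : FibHomotopic (pst Y) (pstFib Y) (pr (prodObj E X) ≫ Pε) (ε ≫ pr Y))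
    (v v' : T ⟶ E) (H : prodObj T X ⟶ P Y)
    (Hs : H ≫ ps Y = prodMap v (𝟙 X) ≫ ε) (Ht : H ≫ pt Y = prodMap v' (𝟙 X) ≫ ε),
    ∃ K : T ⟶ P E, K ≫ ps E = v ∧ K ≫ pt E = v' ∧
      FibHomotopic (pst Y) (pstFib Y)
        (plift (pfst T X ≫ K) (psnd T X ≫ pr X) ≫ θ ≫ Pε) H

/-- Strong homotopy exponential: the canonical functor is essentially surjective and full. -/
def IsStrongExp (X Y E : C) (ε : prodObj E X ⟶ Y) : Prop :=
  IsWeakExp X Y E ε ∧ ExpFull X Y E ε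

/-- Ordinary homotopy exponential: the canonical functor is essentially surjective and
essentially injective. -/
def IsOrdExp (X Y E : C) (ε : prodObj E X ⟶ Y) : Prop :=
  IsWeakExp X Y E ε ∧
    ∀ (T : C) (v v' : T ⟶ E),
      Homotopic (prodMap v (𝟙 X) ≫ ε) (prodMap v' (𝟙 X) ≫ ε) → Homotopic v v'

end PathCat

namespace PathCat

variable {C : Type u} [Category.{v} C] [PathCat C]

attribute [simp] pb_lift₁ pb_lift₂ pr_ps pr_pt

/-! ### Basic lemmas on weak equivalences -/

theorem weq_id (X : C) : Weq (𝟙 X) := iso_weq _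

theorem weq_comp {X Y Z : C} {f : X ⟶ Y} {g : Y ⟶ Z} (hf : Weq f) (hg : Weq g) :
    Weq (f ≫ g) := by
  have h := two_of_six f (𝟙 Y) g (by simpa using hf) (by simpa using hg)
  simpa using h.2.2.2

theorem weq_cancel_left {X Y Z : C} {f : X ⟶ Y} {g : Y ⟶ Z} (hf : Weq f)
    (hfg : Weq (f ≫ g)) : Weq g :=
  (two_of_six (𝟙 X) f g (by simpa using hf) (by simpa using hfg)).2.2.1

theorem weq_cancel_right {X Y Z : C} {f : X ⟶ Y} {g : Y ⟶ Z} (hg : Weq g)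
    (hfg : Weq (f ≫ g)) : Weq f :=
  (two_of_six f g (𝟙 Z) hfg (by simpa using hg)).1

theorem weq_of_inv {X Y : C} (f : X ⟶ Y) (g : Y ⟶ X)
    (h1 : f ≫ g = 𝟙 X) (h2 : g ≫ f = 𝟙 Y) : Weq f := by
  haveI : IsIso f := ⟨⟨g, h1, h2⟩⟩
  exact iso_weq f

/-! ### Reassociated projection lemmas -/

@[simp] theorem pb_lift₁_assoc {X Y Z T W : C} (f : X ⟶ Z) (g : Y ⟶ Z) (hg : Fib g)
    (a : T ⟶ X) (b : T ⟶ Y) (w : a ≫ f = b ≫ g) (k : X ⟶ W) :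
    pb_lift f g hg a b w ≫ pb₁ f g hg ≫ k = a ≫ k := by
  rw [← Category.assoc, pb_lift₁]

@[simp] theorem pb_lift₂_assoc {X Y Z T W : C} (f : X ⟶ Z) (g : Y ⟶ Z) (hg : Fib g)
    (a : T ⟶ X) (b : T ⟶ Y) (w : a ≫ f = b ≫ g) (k : Y ⟶ W) :
    pb_lift f g hg a b w ≫ pb₂ f g hg ≫ k = b ≫ k := by
  rw [← Category.assoc, pb_lift₂]

@[simp] theorem plift_fst_assoc {T X Y W : C} (a : T ⟶ X) (b : T ⟶ Y) (k : X ⟶ W) :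
    plift a b ≫ pfst X Y ≫ k = a ≫ k := by
  rw [← Category.assoc, plift_fst]

@[simp] theorem plift_snd_assoc {T X Y W : C} (a : T ⟶ X) (b : T ⟶ Y) (k : Y ⟶ W) :
    plift a b ≫ psnd X Y ≫ k = b ≫ k := by
  rw [← Category.assoc, plift_snd]

@[simp] theorem pr_ps_assoc {X W : C} (k : X ⟶ W) : pr X ≫ ps X ≫ k = k := by
  rw [← Category.assoc, pr_ps, Category.id_comp]

@[simp] theorem pr_pt_assoc {X W : C} (k : X ⟶ W) : pr X ≫ pt X ≫ k = k := by
  rw [← Category.assoc, pr_pt, Category.id_comp]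

theorem pb_ext {X Y Z T : C} (f : X ⟶ Z) (g : Y ⟶ Z) (hg : Fib g) {t t' : T ⟶ pb f g hg}
    (h1 : t ≫ pb₁ f g hg = t' ≫ pb₁ f g hg) (h2 : t ≫ pb₂ f g hg = t' ≫ pb₂ f g hg) :
    t = t' := pb_lift_unique f g hg t t' h1 h2

theorem prod_ext {X Y T : C} {t t' : T ⟶ prodObj X Y} (h1 : t ≫ pfst X Y = t' ≫ pfst X Y)
    (h2 : t ≫ psnd X Y = t' ≫ psnd X Y) : t = t' := pb_ext _ _ _ h1 h2

theorem comp_plift {S T X Y : C} (x : S ⟶ T) (a : T ⟶ X) (b : T ⟶ Y) :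
    x ≫ plift a b = plift (x ≫ a) (x ≫ b) := by
  apply prod_ext <;> simp

@[simp] theorem prodMap_fst {X X' Y Y' : C} (f : X ⟶ X') (g : Y ⟶ Y') :
    prodMap f g ≫ pfst X' Y' = pfst X Y ≫ f := plift_fst _ _

@[simp] theorem prodMap_snd {X X' Y Y' : C} (f : X ⟶ X') (g : Y ⟶ Y') :
    prodMap f g ≫ psnd X' Y' = psnd X Y ≫ g := plift_snd _ _

@[simp] theorem prodMap_fst_assoc {X X' Y Y' W : C} (f : X ⟶ X') (g : Y ⟶ Y') (k : X' ⟶ W) :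
    prodMap f g ≫ pfst X' Y' ≫ k = pfst X Y ≫ f ≫ k := by
  rw [← Category.assoc, prodMap_fst, Category.assoc]

@[simp] theorem prodMap_snd_assoc {X X' Y Y' W : C} (f : X ⟶ X') (g : Y ⟶ Y') (k : Y' ⟶ W) :
    prodMap f g ≫ psnd X' Y' ≫ k = psnd X Y ≫ g ≫ k := by
  rw [← Category.assoc, prodMap_snd, Category.assoc]

theorem plift_map {T X Y X' Y' : C} (a : T ⟶ X) (b : T ⟶ Y) (f : X ⟶ X') (g : Y ⟶ Y') :
    plift a b ≫ prodMap f g = plift (a ≫ f) (b ≫ g) := by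
  apply prod_ext <;> simp

@[simp] theorem pst_pfst (X : C) : pst X ≫ pfst X X = ps X := plift_fst _ _
@[simp] theorem pst_psnd (X : C) : pst X ≫ psnd X X = pt X := plift_snd _ _

@[simp] theorem pst_pfst_assoc {X W : C} (k : X ⟶ W) : pst X ≫ pfst X X ≫ k = ps X ≫ k := by
  rw [← Category.assoc, pst_pfst]

@[simp] theorem pst_psnd_assoc {X W : C} (k : X ⟶ W) : pst X ≫ psnd X X ≫ k = pt X ≫ k := by
  rw [← Category.assoc, pst_psnd]

theorem comp_pst {T X : C} (x : T ⟶ P X) : x ≫ pst X = plift (x ≫ ps X) (x ≫ pt X) :=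
  comp_plift x (ps X) (pt X)

/-! ### Fibration/weq structure of the basic maps -/

theorem fib_pfst (X Y : C) : Fib (pfst X Y) := pb_fib _ _ _

def pswap (X Y : C) : prodObj X Y ⟶ prodObj Y X := plift (psnd X Y) (pfst X Y)

theorem pswap_pswap (X Y : C) : pswap X Y ≫ pswap Y X = 𝟙 _ := by
  apply prod_ext <;> simp [pswap]

theorem fib_psnd (X Y : C) : Fib (psnd X Y) := by
  have e : psnd X Y = pswap X Y ≫ pfst Y X := by simp [pswap]
  rw [e]
  haveI : IsIso (pswap X Y) := ⟨⟨pswap Y X, pswap_pswap X Y, pswap_pswap Y X⟩⟩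
  exact fib_comp (iso_fib _) (fib_pfst _ _)

theorem fib_ps (X : C) : Fib (ps X) := by
  have e : ps X = pst X ≫ pfst X X := (pst_pfst X).symm
  rw [e]; exact fib_comp (pstFib X) (fib_pfst _ _)

theorem fib_pt (X : C) : Fib (pt X) := by
  have e : pt X = pst X ≫ psnd X X := (pst_psnd X).symm
  rw [e]; exact fib_comp (pstFib X) (fib_psnd _ _)

theorem weq_ps (X : C) : Weq (ps X) :=
  weq_cancel_left (pr_weq X) (by rw [pr_ps]; exact weq_id X)

theorem weq_pt (X : C) : Weq (pt X) :=
  weq_cancel_left (pr_weq X) (by rw [pr_pt]; exact weq_id X)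

end PathCat

namespace PathCat

variable {C : Type u} [Category.{v} C] [PathCat C]

theorem weq_pi_aux {A B : C} (f : A ⟶ B)
    (hc1 : pb₁ (prodMap f (𝟙 B)) (pst B) (pstFib B) ≫ pfst A B ≫ f
      = pb₂ (prodMap f (𝟙 B)) (pst B) (pstFib B) ≫ ps B)
    (hc2 : pb₁ (prodMap f (𝟙 B)) (pst B) (pstFib B) ≫ psnd A B
      = pb₂ (prodMap f (𝟙 B)) (pst B) (pstFib B) ≫ pt B) :
    Weq (pb₁ (prodMap f (𝟙 B)) (pst B) (pstFib B) ≫ pfst A B) := by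
  have hNc := pb_comm f (ps B) (fib_ps B)
  have wα : (pb₁ (prodMap f (𝟙 B)) (pst B) (pstFib B) ≫ pfst A B) ≫ f
      = pb₂ (prodMap f (𝟙 B)) (pst B) (pstFib B) ≫ ps B := by
    rw [Category.assoc]; exact hc1
  have commβ : plift (pb₁ f (ps B) (fib_ps B)) (pb₂ f (ps B) (fib_ps B) ≫ pt B) ≫
      prodMap f (𝟙 B) = pb₂ f (ps B) (fib_ps B) ≫ pst B := by
    apply prod_ext <;> simp [prodMap, pst, hNc]
  have hβα : pb_lift (prodMap f (𝟙 B)) (pst B) (pstFib B)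
        (plift (pb₁ f (ps B) (fib_ps B)) (pb₂ f (ps B) (fib_ps B) ≫ pt B))
        (pb₂ f (ps B) (fib_ps B)) commβ ≫
      pb_lift f (ps B) (fib_ps B)
        (pb₁ (prodMap f (𝟙 B)) (pst B) (pstFib B) ≫ pfst A B)
        (pb₂ (prodMap f (𝟙 B)) (pst B) (pstFib B)) wα = 𝟙 _ := by
    apply pb_ext f (ps B) (fib_ps B) <;> simp
  have hαβ : pb_lift f (ps B) (fib_ps B)
        (pb₁ (prodMap f (𝟙 B)) (pst B) (pstFib B) ≫ pfst A B)
        (pb₂ (prodMap f (𝟙 B)) (pst B) (pstFib B)) wα ≫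
      pb_lift (prodMap f (𝟙 B)) (pst B) (pstFib B)
        (plift (pb₁ f (ps B) (fib_ps B)) (pb₂ f (ps B) (fib_ps B) ≫ pt B))
        (pb₂ f (ps B) (fib_ps B)) commβ = 𝟙 _ := by
    apply pb_ext (prodMap f (𝟙 B)) (pst B) (pstFib B)
    · simp only [Category.assoc, pb_lift₁, Category.id_comp]
      rw [comp_plift]
      apply prod_ext
      · simp
      · simp [hc2]
    · simp
  have e : pb₁ (prodMap f (𝟙 B)) (pst B) (pstFib B) ≫ pfst A B
      = pb_lift f (ps B) (fib_ps B)
        (pb₁ (prodMap f (𝟙 B)) (pst B) (pstFib B) ≫ pfst A B)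
        (pb₂ (prodMap f (𝟙 B)) (pst B) (pstFib B)) wα ≫ pb₁ f (ps B) (fib_ps B) := by
    rw [pb_lift₁]
  rw [e]
  exact weq_comp (weq_of_inv _ _ hαβ hβα) (pb_weq f (ps B) (fib_ps B) (weq_ps B))

end PathCat

namespace PathCat

variable {C : Type u} [Category.{v} C] [PathCat C]

/-! ### Factorization of a map as weak equivalence followed by fibration
(mapping path space). -/

theorem exists_factor {A B : C} (f : A ⟶ B) :
    ∃ (M : C) (j : A ⟶ M) (q : M ⟶ B) (π : M ⟶ A) (γ : M ⟶ P B),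
      j ≫ q = f ∧ j ≫ π = 𝟙 A ∧ Weq j ∧ Fib q ∧ Weq π ∧
      γ ≫ ps B = π ≫ f ∧ γ ≫ pt B = q := by
  have comm₁ : plift (𝟙 A) f ≫ prodMap f (𝟙 B) = (f ≫ pr B) ≫ pst B := by
    apply prod_ext <;> simp [prodMap, pst]
  have hc := pb_comm (prodMap f (𝟙 B)) (pst B) (pstFib B)
  have hc1 : pb₁ (prodMap f (𝟙 B)) (pst B) (pstFib B) ≫ pfst A B ≫ f
      = pb₂ (prodMap f (𝟙 B)) (pst B) (pstFib B) ≫ ps B := by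
    have := congrArg (· ≫ pfst B B) hc
    simpa [prodMap, pst] using this
  have hc2 : pb₁ (prodMap f (𝟙 B)) (pst B) (pstFib B) ≫ psnd A B
      = pb₂ (prodMap f (𝟙 B)) (pst B) (pstFib B) ≫ pt B := by
    have := congrArg (· ≫ psnd B B) hc
    simpa [prodMap, pst] using this
  refine ⟨pb (prodMap f (𝟙 B)) (pst B) (pstFib B),
    pb_lift (prodMap f (𝟙 B)) (pst B) (pstFib B) (plift (𝟙 A) f) (f ≫ pr B) comm₁,
    pb₁ (prodMap f (𝟙 B)) (pst B) (pstFib B) ≫ psnd A B,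
    pb₁ (prodMap f (𝟙 B)) (pst B) (pstFib B) ≫ pfst A B,
    pb₂ (prodMap f (𝟙 B)) (pst B) (pstFib B),
    ?_, ?_, ?_, ?_, ?_, ?_, ?_⟩
  · simp
  · simp
  · -- Weq j
    refine weq_cancel_right (g := pb₁ (prodMap f (𝟙 B)) (pst B) (pstFib B) ≫ pfst A B) ?_ ?_
    · -- Weq π, proved below; we inline the iso argument here
      exact weq_pi_aux f hc1 hc2
    · have : pb_lift (prodMap f (𝟙 B)) (pst B) (pstFib B) (plift (𝟙 A) f) (f ≫ pr B) comm₁ ≫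
          pb₁ (prodMap f (𝟙 B)) (pst B) (pstFib B) ≫ pfst A B = 𝟙 A := by simp
      rw [this]; exact weq_id A
  · exact fib_comp (pb_fib _ _ _) (fib_psnd _ _)
  · exact weq_pi_aux f hc1 hc2
  · rw [Category.assoc]; exact hc1.symm
  · exact hc2.symm

end PathCat

namespace PathCat

variable {C : Type u} [Category.{v} C] [PathCat C]

/-! ### The basic lifting lemma (lower triangle strict) -/

theorem lift₀ {A B E D : C} (w : A ⟶ B) (p : E ⟶ D) (a : A ⟶ E) (b : B ⟶ D)
    (hw : Weq w) (hp : Fib p) (comm : a ≫ p = w ≫ b) : ∃ d : B ⟶ E, d ≫ p = b := by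
  obtain ⟨M, j, q, π, γ, hjq, hjπ, hj, hq, hπ, -, -⟩ :=
    exists_factor (pb_lift b p hp w a comm.symm)
  have hgfib : Fib (q ≫ pb₁ b p hp) := fib_comp hq (pb_fib _ _ _)
  have hgweq : Weq (q ≫ pb₁ b p hp) := by
    refine weq_cancel_left hj ?_
    have e : j ≫ q ≫ pb₁ b p hp = w := by
      rw [← Category.assoc, hjq, pb_lift₁]
    rw [e]; exact hw
  obtain ⟨ς, hς⟩ := acyc_section _ hgfib hgweq
  refine ⟨ς ≫ q ≫ pb₂ b p hp, ?_⟩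
  have hpb := pb_comm b p hp
  calc (ς ≫ q ≫ pb₂ b p hp) ≫ p = ς ≫ q ≫ pb₂ b p hp ≫ p := by
        simp [Category.assoc]
    _ = ς ≫ q ≫ pb₁ b p hp ≫ b := by rw [← hpb]
    _ = (ς ≫ (q ≫ pb₁ b p hp)) ≫ b := by simp [Category.assoc]
    _ = b := by rw [hς, Category.id_comp]

/-! ### A fiberwise path object for every fibration -/

theorem exists_fibPathObj {E D : C} (p : E ⟶ D) (hp : Fib p) :
    Nonempty (FibPathObj p hp) := by
  obtain ⟨M, j, q, π, γ, hjq, hjπ, hj, hq, hπ, -, -⟩ :=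
    exists_factor (pb_lift p p hp (𝟙 E) (𝟙 E) rfl)
  have hpb := pb_comm p p hp
  refine ⟨⟨M, j, q ≫ pb₁ p p hp, q ≫ pb₂ p p hp, ?_, ?_, ?_, hj, ?_⟩⟩
  · rw [← Category.assoc, hjq, pb_lift₁]
  · rw [← Category.assoc, hjq, pb_lift₂]
  · rw [Category.assoc, Category.assoc, hpb]
  · have e : pb_lift p p hp (q ≫ pb₁ p p hp) (q ≫ pb₂ p p hp)
        (by rw [Category.assoc, Category.assoc, hpb]) = q := by
      apply pb_ext p p hp <;> simp
    rw [e]; exact hq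

/-! ### Fiberwise homotopy between maps with equal composites into an
acyclic fibration -/

theorem fibHomotopic_of_eq_comp {A M B : C} {π : M ⟶ B} (hfib : Fib π) (hweq : Weq π)
    {x y : A ⟶ M} (hxy : x ≫ π = y ≫ π) : FibHomotopic π hfib x y := by
  obtain ⟨N, j, q, π', γ, hjq, hjπ', hj, hq, hπ', -, -⟩ :=
    exists_factor (pb_lift π π hfib (𝟙 M) (𝟙 M) rfl)
  have hpb := pb_comm π π hfib
  have hsp : (q ≫ pb₁ π π hfib) ≫ π = (q ≫ pb₂ π π hfib) ≫ π := by
    rw [Category.assoc, Category.assoc, hpb]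
  have hst : pb_lift π π hfib (q ≫ pb₁ π π hfib) (q ≫ pb₂ π π hfib) hsp = q := by
    apply pb_ext π π hfib <;> simp
  -- q is an acyclic fibration since the diagonal of an acyclic fibration is a weq
  have hδ : Weq (pb_lift π π hfib (𝟙 M) (𝟙 M) rfl) := by
    refine weq_cancel_right (pb_weq π π hfib hweq) ?_
    rw [pb_lift₁]; exact weq_id M
  have hqweq : Weq q := weq_cancel_left hj (by rw [hjq]; exact hδ)
  obtain ⟨τ, hτ⟩ := acyc_section q hq hqweq
  refine ⟨⟨N, j, q ≫ pb₁ π π hfib, q ≫ pb₂ π π hfib, ?_, ?_, hsp, hj, ?_⟩,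
    pb_lift π π hfib x y hxy ≫ τ, ?_, ?_⟩
  · rw [← Category.assoc, hjq, pb_lift₁]
  · rw [← Category.assoc, hjq, pb_lift₂]
  · rw [hst]; exact hq
  · show (pb_lift π π hfib x y hxy ≫ τ) ≫ (q ≫ pb₁ π π hfib) = x
    rw [Category.assoc, ← Category.assoc τ q, hτ, Category.id_comp, pb_lift₁]
  · show (pb_lift π π hfib x y hxy ≫ τ) ≫ (q ≫ pb₂ π π hfib) = y
    rw [Category.assoc, ← Category.assoc τ q, hτ, Category.id_comp, pb_lift₂]

end PathCat

namespace PathCat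

variable {C : Type u} [Category.{v} C] [PathCat C]

/-! ### Pushing fiberwise homotopies forward along maps of fibrations -/

theorem fibHomotopic_push {A M B' E D : C} {π : M ⟶ B'} {p : E ⟶ D} (hπ : Fib π) (hp : Fib p)
    {φ : M ⟶ E} {b' : B' ⟶ D} (hφ : φ ≫ p = π ≫ b') {x y : A ⟶ M}
    (hxy : FibHomotopic π hπ x y) : FibHomotopic p hp (x ≫ φ) (y ≫ φ) := by
  obtain ⟨Q, G, hs, ht⟩ := hxy
  obtain ⟨Q₀⟩ := exists_fibPathObj p hp
  have hbcomm : (Q.s ≫ φ) ≫ p = (Q.t ≫ φ) ≫ p := by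
    rw [Category.assoc, hφ, Category.assoc, hφ, ← Category.assoc, ← Category.assoc, Q.sp]
  have hsq : (φ ≫ Q₀.r) ≫ pb_lift p p hp Q₀.s Q₀.t Q₀.sp
      = Q.r ≫ pb_lift p p hp (Q.s ≫ φ) (Q.t ≫ φ) hbcomm := by
    apply pb_ext p p hp
    · calc ((φ ≫ Q₀.r) ≫ pb_lift p p hp Q₀.s Q₀.t Q₀.sp) ≫ pb₁ p p hp
          = φ ≫ Q₀.r ≫ Q₀.s := by rw [Category.assoc, Category.assoc, pb_lift₁]
        _ = φ := by rw [Q₀.rs, Category.comp_id]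
        _ = (Q.r ≫ Q.s) ≫ φ := by rw [Q.rs, Category.id_comp]
        _ = (Q.r ≫ pb_lift p p hp (Q.s ≫ φ) (Q.t ≫ φ) hbcomm) ≫ pb₁ p p hp := by
            rw [Category.assoc, Category.assoc, pb_lift₁]
    · calc ((φ ≫ Q₀.r) ≫ pb_lift p p hp Q₀.s Q₀.t Q₀.sp) ≫ pb₂ p p hp
          = φ ≫ Q₀.r ≫ Q₀.t := by rw [Category.assoc, Category.assoc, pb_lift₂]
        _ = φ := by rw [Q₀.rt, Category.comp_id]
        _ = (Q.r ≫ Q.t) ≫ φ := by rw [Q.rt, Category.id_comp]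
        _ = (Q.r ≫ pb_lift p p hp (Q.s ≫ φ) (Q.t ≫ φ) hbcomm) ≫ pb₂ p p hp := by
            rw [Category.assoc, Category.assoc, pb_lift₂]
  obtain ⟨c, hc⟩ := lift₀ Q.r (pb_lift p p hp Q₀.s Q₀.t Q₀.sp) (φ ≫ Q₀.r)
      (pb_lift p p hp (Q.s ≫ φ) (Q.t ≫ φ) hbcomm) Q.rweq Q₀.stfib hsq
  have hcs : c ≫ Q₀.s = Q.s ≫ φ := by
    have := congrArg (· ≫ pb₁ p p hp) hc; simpa using this
  have hct : c ≫ Q₀.t = Q.t ≫ φ := by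
    have := congrArg (· ≫ pb₂ p p hp) hc; simpa using this
  refine ⟨Q₀, G ≫ c, ?_, ?_⟩
  · rw [Category.assoc, hcs, ← Category.assoc, hs]
  · rw [Category.assoc, hct, ← Category.assoc, ht]

/-! ### Lifting with homotopy-commuting upper triangle -/

theorem lift_strong {A B E D : C} (w : A ⟶ B) (p : E ⟶ D) (a : A ⟶ E) (b : B ⟶ D)
    (hw : Weq w) (hp : Fib p) (comm : a ≫ p = w ≫ b) :
    ∃ d : B ⟶ E, d ≫ p = b ∧ FibHomotopic p hp (w ≫ d) a := by
  obtain ⟨M, j, q, π, γ, hjq, hjπ, hj, hq, hπ, -, -⟩ :=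
    exists_factor (pb_lift b p hp w a comm.symm)
  have hgfib : Fib (q ≫ pb₁ b p hp) := fib_comp hq (pb_fib _ _ _)
  have hjg : j ≫ q ≫ pb₁ b p hp = w := by rw [← Category.assoc, hjq, pb_lift₁]
  have hgweq : Weq (q ≫ pb₁ b p hp) := weq_cancel_left hj (by rw [hjg]; exact hw)
  obtain ⟨ς, hς⟩ := acyc_section _ hgfib hgweq
  refine ⟨ς ≫ q ≫ pb₂ b p hp, ?_, ?_⟩
  · calc (ς ≫ q ≫ pb₂ b p hp) ≫ p = ς ≫ q ≫ pb₂ b p hp ≫ p := by simp [Category.assoc]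
      _ = ς ≫ q ≫ pb₁ b p hp ≫ b := by rw [← pb_comm]
      _ = (ς ≫ (q ≫ pb₁ b p hp)) ≫ b := by simp [Category.assoc]
      _ = b := by rw [hς, Category.id_comp]
  · have h14 : FibHomotopic (q ≫ pb₁ b p hp) hgfib (w ≫ ς) j := by
      refine fibHomotopic_of_eq_comp hgfib hgweq ?_
      rw [Category.assoc, hς, Category.comp_id, hjg]
    have hφ : (q ≫ pb₂ b p hp) ≫ p = (q ≫ pb₁ b p hp) ≫ b := by
      rw [Category.assoc, Category.assoc, ← pb_comm]
    have hh := fibHomotopic_push hgfib hp hφ h14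
    have e1 : (w ≫ ς) ≫ q ≫ pb₂ b p hp = w ≫ ς ≫ q ≫ pb₂ b p hp := by
      simp [Category.assoc]
    have e2 : j ≫ q ≫ pb₂ b p hp = a := by rw [← Category.assoc, hjq, pb_lift₂]
    rwa [e1, e2] at hh

/-! ### Calculus of fiberwise homotopies -/

theorem fibHomotopic_precomp {E D A S : C} {p : E ⟶ D} {hp : Fib p} {x y : A ⟶ E} (z : S ⟶ A)
    (hxy : FibHomotopic p hp x y) : FibHomotopic p hp (z ≫ x) (z ≫ y) := by
  obtain ⟨Q, G, hs, ht⟩ := hxy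
  exact ⟨Q, z ≫ G, by rw [Category.assoc, hs], by rw [Category.assoc, ht]⟩

theorem fibHomotopic_symm {E D A : C} {p : E ⟶ D} {hp : Fib p} {x y : A ⟶ E}
    (hxy : FibHomotopic p hp x y) : FibHomotopic p hp y x := by
  obtain ⟨Q, G, hs, ht⟩ := hxy
  obtain ⟨Q₀⟩ := exists_fibPathObj p hp
  have hsq : Q₀.r ≫ pb_lift p p hp Q₀.s Q₀.t Q₀.sp
      = Q.r ≫ pb_lift p p hp Q.t Q.s Q.sp.symm := by
    apply pb_ext p p hp <;>
      simp [Q.rs, Q.rt, Q₀.rs, Q₀.rt]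
  obtain ⟨c, hc⟩ := lift₀ Q.r (pb_lift p p hp Q₀.s Q₀.t Q₀.sp) Q₀.r
      (pb_lift p p hp Q.t Q.s Q.sp.symm) Q.rweq Q₀.stfib hsq
  have hcs : c ≫ Q₀.s = Q.t := by
    have := congrArg (· ≫ pb₁ p p hp) hc; simpa using this
  have hct : c ≫ Q₀.t = Q.s := by
    have := congrArg (· ≫ pb₂ p p hp) hc; simpa using this
  refine ⟨Q₀, G ≫ c, ?_, ?_⟩
  · rw [Category.assoc, hcs, ht]
  · rw [Category.assoc, hct, hs]

theorem fibHomotopic_trans {E D A : C} {p : E ⟶ D} {hp : Fib p} {x y z : A ⟶ E}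
    (h1 : FibHomotopic p hp x y) (h2 : FibHomotopic p hp y z) : FibHomotopic p hp x z := by
  obtain ⟨Q₁, G₁, hs1, ht1⟩ := h1
  obtain ⟨Q₂, G₂, hs2, ht2⟩ := h2
  obtain ⟨Q₀⟩ := exists_fibPathObj p hp
  have hfibs2 : Fib Q₂.s := by
    have e : Q₂.s = pb_lift p p hp Q₂.s Q₂.t Q₂.sp ≫ pb₁ p p hp := by rw [pb_lift₁]
    rw [e]; exact fib_comp Q₂.stfib (pb_fib _ _ _)
  have hweqs2 : Weq Q₂.s := weq_cancel_left Q₂.rweq (by rw [Q₂.rs]; exact weq_id _)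
  have hrr : Q₁.r ≫ Q₁.t = Q₂.r ≫ Q₂.s := by rw [Q₁.rt, Q₂.rs]
  have hGG : G₁ ≫ Q₁.t = G₂ ≫ Q₂.s := by rw [ht1, hs2]
  have hDc := pb_comm Q₁.t Q₂.s hfibs2
  have hbD : (pb₁ Q₁.t Q₂.s hfibs2 ≫ Q₁.s) ≫ p = (pb₂ Q₁.t Q₂.s hfibs2 ≫ Q₂.t) ≫ p := by
    calc (pb₁ Q₁.t Q₂.s hfibs2 ≫ Q₁.s) ≫ p = pb₁ Q₁.t Q₂.s hfibs2 ≫ Q₁.t ≫ p := by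
          rw [Category.assoc, Q₁.sp]
      _ = pb₂ Q₁.t Q₂.s hfibs2 ≫ Q₂.s ≫ p := by
          rw [← Category.assoc, hDc, Category.assoc]
      _ = (pb₂ Q₁.t Q₂.s hfibs2 ≫ Q₂.t) ≫ p := by rw [Q₂.sp, Category.assoc]
  have hrweq : Weq (pb_lift Q₁.t Q₂.s hfibs2 Q₁.r Q₂.r hrr) :=
    weq_cancel_right (pb_weq _ _ _ hweqs2) (by rw [pb_lift₁]; exact Q₁.rweq)
  have hsq : Q₀.r ≫ pb_lift p p hp Q₀.s Q₀.t Q₀.sp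
      = pb_lift Q₁.t Q₂.s hfibs2 Q₁.r Q₂.r hrr ≫
        pb_lift p p hp (pb₁ Q₁.t Q₂.s hfibs2 ≫ Q₁.s) (pb₂ Q₁.t Q₂.s hfibs2 ≫ Q₂.t) hbD := by
    apply pb_ext p p hp <;>
      simp [Q₀.rs, Q₀.rt, Q₁.rs, Q₂.rt]
  obtain ⟨c, hc⟩ := lift₀ _ _ Q₀.r _ hrweq Q₀.stfib hsq
  have hcs : c ≫ Q₀.s = pb₁ Q₁.t Q₂.s hfibs2 ≫ Q₁.s := by
    have := congrArg (· ≫ pb₁ p p hp) hc; simpa using this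
  have hct : c ≫ Q₀.t = pb₂ Q₁.t Q₂.s hfibs2 ≫ Q₂.t := by
    have := congrArg (· ≫ pb₂ p p hp) hc; simpa using this
  refine ⟨Q₀, pb_lift Q₁.t Q₂.s hfibs2 G₁ G₂ hGG ≫ c, ?_, ?_⟩
  · rw [Category.assoc, hcs, ← Category.assoc, pb_lift₁, hs1]
  · rw [Category.assoc, hct, ← Category.assoc, pb_lift₂, ht2]

theorem fibHomotopic_extend {A B E D : C} {p : E ⟶ D} {hp : Fib p} {w : A ⟶ B}
    (hw : Weq w) {F G : B ⟶ E} (hFG : F ≫ p = G ≫ p)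
    (h : FibHomotopic p hp (w ≫ F) (w ≫ G)) : FibHomotopic p hp F G := by
  obtain ⟨Q, G₀', hs, ht⟩ := h
  obtain ⟨Q₀⟩ := exists_fibPathObj p hp
  have hsq1 : Q₀.r ≫ pb_lift p p hp Q₀.s Q₀.t Q₀.sp
      = Q.r ≫ pb_lift p p hp Q.s Q.t Q.sp := by
    apply pb_ext p p hp <;> simp [Q.rs, Q.rt, Q₀.rs, Q₀.rt]
  obtain ⟨c, hc⟩ := lift₀ Q.r _ Q₀.r _ Q.rweq Q₀.stfib hsq1
  have hcs : c ≫ Q₀.s = Q.s := by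
    have := congrArg (· ≫ pb₁ p p hp) hc; simpa using this
  have hct : c ≫ Q₀.t = Q.t := by
    have := congrArg (· ≫ pb₂ p p hp) hc; simpa using this
  have hsq2 : (G₀' ≫ c) ≫ pb_lift p p hp Q₀.s Q₀.t Q₀.sp
      = w ≫ pb_lift p p hp F G hFG := by
    apply pb_ext p p hp
    · calc ((G₀' ≫ c) ≫ pb_lift p p hp Q₀.s Q₀.t Q₀.sp) ≫ pb₁ p p hp
          = G₀' ≫ c ≫ Q₀.s := by rw [Category.assoc, Category.assoc, pb_lift₁]
        _ = w ≫ F := by rw [hcs, hs]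
        _ = (w ≫ pb_lift p p hp F G hFG) ≫ pb₁ p p hp := by
            rw [Category.assoc, pb_lift₁]
    · calc ((G₀' ≫ c) ≫ pb_lift p p hp Q₀.s Q₀.t Q₀.sp) ≫ pb₂ p p hp
          = G₀' ≫ c ≫ Q₀.t := by rw [Category.assoc, Category.assoc, pb_lift₂]
        _ = w ≫ G := by rw [hct, ht]
        _ = (w ≫ pb_lift p p hp F G hFG) ≫ pb₂ p p hp := by
            rw [Category.assoc, pb_lift₂]
  obtain ⟨ℓ, hℓ⟩ := lift₀ w _ (G₀' ≫ c) _ hw Q₀.stfib hsq2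
  refine ⟨Q₀, ℓ, ?_, ?_⟩
  · have := congrArg (· ≫ pb₁ p p hp) hℓ; simpa using this
  · have := congrArg (· ≫ pb₂ p p hp) hℓ; simpa using this

/-! ### Functorial action on paths, up to fiberwise homotopy -/

theorem exists_pmap {Y Z : C} (k : Y ⟶ Z) :
    ∃ Pk : P Y ⟶ P Z, Pk ≫ ps Z = ps Y ≫ k ∧ Pk ≫ pt Z = pt Y ≫ k ∧
      FibHomotopic (pst Z) (pstFib Z) (pr Y ≫ Pk) (k ≫ pr Z) := by
  have comm : (k ≫ pr Z) ≫ pst Z = pr Y ≫ plift (ps Y ≫ k) (pt Y ≫ k) := by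
    apply prod_ext <;> simp [pst]
  obtain ⟨d, hd, hup⟩ := lift_strong (pr Y) (pst Z) (k ≫ pr Z)
      (plift (ps Y ≫ k) (pt Y ≫ k)) (pr_weq Y) (pstFib Z) comm
  refine ⟨d, ?_, ?_, hup⟩
  · have := congrArg (· ≫ pfst Z Z) hd; simpa [pst] using this
  · have := congrArg (· ≫ psnd Z Z) hd; simpa [pst] using this

/-! ### Transitivity of homotopy w.r.t. the chosen path object -/

theorem homotopic_trans {T W : C} {f g u : T ⟶ W} (h1 : Homotopic f g) (h2 : Homotopic g u) :
    Homotopic f u := by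
  obtain ⟨H₁, hs1, ht1⟩ := h1
  obtain ⟨H₂, hs2, ht2⟩ := h2
  have hD : Weq (pb₁ (pt W) (ps W) (fib_ps W)) := pb_weq _ _ _ (weq_ps W)
  have hrr : pr W ≫ pt W = pr W ≫ ps W := by rw [pr_pt, pr_ps]
  have hrweq : Weq (pb_lift (pt W) (ps W) (fib_ps W) (pr W) (pr W) hrr) :=
    weq_cancel_right hD (by rw [pb_lift₁]; exact pr_weq W)
  have hcomm : pr W ≫ pst W = pb_lift (pt W) (ps W) (fib_ps W) (pr W) (pr W) hrr ≫
      plift (pb₁ (pt W) (ps W) (fib_ps W) ≫ ps W) (pb₂ (pt W) (ps W) (fib_ps W) ≫ pt W) := by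
    apply prod_ext <;> simp [pst]
  obtain ⟨c, hc⟩ := lift₀ _ (pst W) (pr W) _ hrweq (pstFib W) hcomm
  refine ⟨pb_lift (pt W) (ps W) (fib_ps W) H₁ H₂ (by rw [ht1, hs2]) ≫ c, ?_, ?_⟩
  · have h1' : c ≫ ps W = pb₁ (pt W) (ps W) (fib_ps W) ≫ ps W := by
      have := congrArg (· ≫ pfst W W) hc; simpa [pst] using this
    rw [Category.assoc, h1', ← Category.assoc, pb_lift₁, hs1]
  · have h2' : c ≫ pt W = pb₂ (pt W) (ps W) (fib_ps W) ≫ pt W := by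
      have := congrArg (· ≫ psnd W W) hc; simpa [pst] using this
    rw [Category.assoc, h2', ← Category.assoc, pb_lift₂, ht2]

end PathCat

namespace PathCat

variable {C : Type u} [Category.{v} C] [PathCat C]

theorem weq_pi_aux' {A B : C} (f : A ⟶ B)
    (hc1 : pb₁ (prodMap (𝟙 B) f) (pst B) (pstFib B) ≫ psnd B A ≫ f
      = pb₂ (prodMap (𝟙 B) f) (pst B) (pstFib B) ≫ pt B)
    (hc2 : pb₁ (prodMap (𝟙 B) f) (pst B) (pstFib B) ≫ pfst B A
      = pb₂ (prodMap (𝟙 B) f) (pst B) (pstFib B) ≫ ps B) :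
    Weq (pb₁ (prodMap (𝟙 B) f) (pst B) (pstFib B) ≫ psnd B A) := by
  have hNc := pb_comm f (pt B) (fib_pt B)
  have wα : (pb₁ (prodMap (𝟙 B) f) (pst B) (pstFib B) ≫ psnd B A) ≫ f
      = pb₂ (prodMap (𝟙 B) f) (pst B) (pstFib B) ≫ pt B := by
    rw [Category.assoc]; exact hc1
  have commβ : plift (pb₂ f (pt B) (fib_pt B) ≫ ps B) (pb₁ f (pt B) (fib_pt B)) ≫
      prodMap (𝟙 B) f = pb₂ f (pt B) (fib_pt B) ≫ pst B := by
    apply prod_ext <;> simp [prodMap, pst, hNc]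
  have hβα : pb_lift (prodMap (𝟙 B) f) (pst B) (pstFib B)
        (plift (pb₂ f (pt B) (fib_pt B) ≫ ps B) (pb₁ f (pt B) (fib_pt B)))
        (pb₂ f (pt B) (fib_pt B)) commβ ≫
      pb_lift f (pt B) (fib_pt B)
        (pb₁ (prodMap (𝟙 B) f) (pst B) (pstFib B) ≫ psnd B A)
        (pb₂ (prodMap (𝟙 B) f) (pst B) (pstFib B)) wα = 𝟙 _ := by
    apply pb_ext f (pt B) (fib_pt B) <;> simp
  have hαβ : pb_lift f (pt B) (fib_pt B)
        (pb₁ (prodMap (𝟙 B) f) (pst B) (pstFib B) ≫ psnd B A)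
        (pb₂ (prodMap (𝟙 B) f) (pst B) (pstFib B)) wα ≫
      pb_lift (prodMap (𝟙 B) f) (pst B) (pstFib B)
        (plift (pb₂ f (pt B) (fib_pt B) ≫ ps B) (pb₁ f (pt B) (fib_pt B)))
        (pb₂ f (pt B) (fib_pt B)) commβ = 𝟙 _ := by
    apply pb_ext (prodMap (𝟙 B) f) (pst B) (pstFib B)
    · simp only [Category.assoc, pb_lift₁, Category.id_comp]
      rw [comp_plift]
      apply prod_ext
      · simp [hc2]
      · simp
    · simp
  have e : pb₁ (prodMap (𝟙 B) f) (pst B) (pstFib B) ≫ psnd B A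
      = pb_lift f (pt B) (fib_pt B)
        (pb₁ (prodMap (𝟙 B) f) (pst B) (pstFib B) ≫ psnd B A)
        (pb₂ (prodMap (𝟙 B) f) (pst B) (pstFib B)) wα ≫ pb₁ f (pt B) (fib_pt B) := by
    rw [pb_lift₁]
  rw [e]
  exact weq_comp (weq_of_inv _ _ hαβ hβα) (pb_weq f (pt B) (fib_pt B) (weq_pt B))

/-- Whiskering with a weak equivalence is full on homotopies:
a homotopy between `h`-images lifts (with strict endpoints) up to
fiberwise homotopy over `Z × Z`. -/
theorem unwhisker {Y Z : C} {h : Y ⟶ Z} (hw : Weq h)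
    {Ph : P Y ⟶ P Z} (hPs : Ph ≫ ps Z = ps Y ≫ h) (hPt : Ph ≫ pt Z = pt Y ≫ h)
    {T' : C} {a b : T' ⟶ Y} {H : T' ⟶ P Z}
    (Hs : H ≫ ps Z = a ≫ h) (Ht : H ≫ pt Z = b ≫ h) :
    ∃ HY : T' ⟶ P Y, HY ≫ ps Y = a ∧ HY ≫ pt Y = b ∧
      FibHomotopic (pst Z) (pstFib Z) (HY ≫ Ph) H := by
  have hPh : Ph ≫ pst Z = pst Y ≫ prodMap h h := by
    apply prod_ext <;> simp [pst, prodMap, hPs, hPt]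
  -- the object V = (Y × Y) ×_{Z × Z} P Z
  have hVc := pb_comm (prodMap h h) (pst Z) (pstFib Z)
  have hv1 : pb₁ (prodMap h h) (pst Z) (pstFib Z) ≫ pfst Y Y ≫ h
      = pb₂ (prodMap h h) (pst Z) (pstFib Z) ≫ ps Z := by
    have := congrArg (· ≫ pfst Z Z) hVc; simpa [prodMap, pst] using this
  have hv2 : pb₁ (prodMap h h) (pst Z) (pstFib Z) ≫ psnd Y Y ≫ h
      = pb₂ (prodMap h h) (pst Z) (pstFib Z) ≫ pt Z := by
    have := congrArg (· ≫ psnd Z Z) hVc; simpa [prodMap, pst] using this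
  -- the comparison map ĉ : P Y ⟶ V
  have commc : pst Y ≫ prodMap h h = Ph ≫ pst Z := hPh.symm
  -- the object M' = (Z × Y) ×_{Z × Z} P Z and the acyclic fibration ω : M' ⟶ Z
  have hMc := pb_comm (prodMap (𝟙 Z) h) (pst Z) (pstFib Z)
  have hm1 : pb₁ (prodMap (𝟙 Z) h) (pst Z) (pstFib Z) ≫ pfst Z Y
      = pb₂ (prodMap (𝟙 Z) h) (pst Z) (pstFib Z) ≫ ps Z := by
    have := congrArg (· ≫ pfst Z Z) hMc; simpa [prodMap, pst] using this
  have hm2 : pb₁ (prodMap (𝟙 Z) h) (pst Z) (pstFib Z) ≫ psnd Z Y ≫ h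
      = pb₂ (prodMap (𝟙 Z) h) (pst Z) (pstFib Z) ≫ pt Z := by
    have := congrArg (· ≫ psnd Z Z) hMc; simpa [prodMap, pst] using this
  have hweqρ : Weq (pb₁ (prodMap (𝟙 Z) h) (pst Z) (pstFib Z) ≫ psnd Z Y) :=
    weq_pi_aux' h hm2 hm1
  have commjΩ : plift h (𝟙 Y) ≫ prodMap (𝟙 Z) h = (h ≫ pr Z) ≫ pst Z := by
    apply prod_ext <;> simp [prodMap, pst]
  have hjρ : pb_lift (prodMap (𝟙 Z) h) (pst Z) (pstFib Z) (plift h (𝟙 Y)) (h ≫ pr Z) commjΩ ≫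
      pb₁ (prodMap (𝟙 Z) h) (pst Z) (pstFib Z) ≫ psnd Z Y = 𝟙 Y := by
    rw [← Category.assoc, pb_lift₁, plift_snd]
  have hweqjΩ : Weq (pb_lift (prodMap (𝟙 Z) h) (pst Z) (pstFib Z)
      (plift h (𝟙 Y)) (h ≫ pr Z) commjΩ) :=
    weq_cancel_right hweqρ (by rw [hjρ]; exact weq_id Y)
  have hweqω : Weq (pb₁ (prodMap (𝟙 Z) h) (pst Z) (pstFib Z) ≫ pfst Z Y) := by
    refine weq_cancel_left hweqjΩ ?_
    have e : pb_lift (prodMap (𝟙 Z) h) (pst Z) (pstFib Z) (plift h (𝟙 Y)) (h ≫ pr Z) commjΩ ≫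
        pb₁ (prodMap (𝟙 Z) h) (pst Z) (pstFib Z) ≫ pfst Z Y = h := by
      rw [← Category.assoc, pb_lift₁, plift_fst]
    rw [e]; exact hw
  have hfibω : Fib (pb₁ (prodMap (𝟙 Z) h) (pst Z) (pstFib Z) ≫ pfst Z Y) :=
    fib_comp (pb_fib _ _ _) (fib_pfst _ _)
  -- V is isomorphic to the pullback of ω along h, hence a₁ : V ⟶ Y is a weq
  have commmV : plift (pb₂ (prodMap h h) (pst Z) (pstFib Z) ≫ ps Z)
      (pb₁ (prodMap h h) (pst Z) (pstFib Z) ≫ psnd Y Y) ≫ prodMap (𝟙 Z) h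
      = pb₂ (prodMap h h) (pst Z) (pstFib Z) ≫ pst Z := by
    apply prod_ext <;> simp [hv2]
  have w₃ : (pb₁ (prodMap h h) (pst Z) (pstFib Z) ≫ pfst Y Y) ≫ h
      = pb_lift (prodMap (𝟙 Z) h) (pst Z) (pstFib Z)
          (plift (pb₂ (prodMap h h) (pst Z) (pstFib Z) ≫ ps Z)
            (pb₁ (prodMap h h) (pst Z) (pstFib Z) ≫ psnd Y Y))
          (pb₂ (prodMap h h) (pst Z) (pstFib Z)) commmV ≫
        (pb₁ (prodMap (𝟙 Z) h) (pst Z) (pstFib Z) ≫ pfst Z Y) := by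
    rw [← Category.assoc, pb_lift₁, plift_fst, Category.assoc]
    exact hv1
  have commψ₃ : plift (pb₁ h _ hfibω)
      (pb₂ h _ hfibω ≫ pb₁ (prodMap (𝟙 Z) h) (pst Z) (pstFib Z) ≫ psnd Z Y) ≫ prodMap h h
      = (pb₂ h _ hfibω ≫ pb₂ (prodMap (𝟙 Z) h) (pst Z) (pstFib Z)) ≫ pst Z := by
    have hN₃c := pb_comm h _ hfibω
    apply prod_ext
    · simp [hN₃c, hm1]
    · simp [hm2]
  have hφψ₃ : pb_lift h _ hfibω (pb₁ (prodMap h h) (pst Z) (pstFib Z) ≫ pfst Y Y)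
        (pb_lift (prodMap (𝟙 Z) h) (pst Z) (pstFib Z)
          (plift (pb₂ (prodMap h h) (pst Z) (pstFib Z) ≫ ps Z)
            (pb₁ (prodMap h h) (pst Z) (pstFib Z) ≫ psnd Y Y))
          (pb₂ (prodMap h h) (pst Z) (pstFib Z)) commmV) w₃ ≫
      pb_lift (prodMap h h) (pst Z) (pstFib Z)
        (plift (pb₁ h _ hfibω)
          (pb₂ h _ hfibω ≫ pb₁ (prodMap (𝟙 Z) h) (pst Z) (pstFib Z) ≫ psnd Z Y))
        (pb₂ h _ hfibω ≫ pb₂ (prodMap (𝟙 Z) h) (pst Z) (pstFib Z)) commψ₃ = 𝟙 _ := by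
    apply pb_ext (prodMap h h) (pst Z) (pstFib Z)
    · simp only [Category.assoc, pb_lift₁, Category.id_comp]
      rw [comp_plift]
      apply prod_ext
      · simp
      · simp
    · simp
  have hψφ₃ : pb_lift (prodMap h h) (pst Z) (pstFib Z)
        (plift (pb₁ h _ hfibω)
          (pb₂ h _ hfibω ≫ pb₁ (prodMap (𝟙 Z) h) (pst Z) (pstFib Z) ≫ psnd Z Y))
        (pb₂ h _ hfibω ≫ pb₂ (prodMap (𝟙 Z) h) (pst Z) (pstFib Z)) commψ₃ ≫
      pb_lift h _ hfibω (pb₁ (prodMap h h) (pst Z) (pstFib Z) ≫ pfst Y Y)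
        (pb_lift (prodMap (𝟙 Z) h) (pst Z) (pstFib Z)
          (plift (pb₂ (prodMap h h) (pst Z) (pstFib Z) ≫ ps Z)
            (pb₁ (prodMap h h) (pst Z) (pstFib Z) ≫ psnd Y Y))
          (pb₂ (prodMap h h) (pst Z) (pstFib Z)) commmV) w₃ = 𝟙 _ := by
    apply pb_ext h _ hfibω
    · simp only [Category.assoc, pb_lift₁, Category.id_comp]
      rw [← Category.assoc, pb_lift₁, plift_fst]
    · simp only [Category.assoc, pb_lift₂, Category.id_comp]
      apply pb_ext (prodMap (𝟙 Z) h) (pst Z) (pstFib Z)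
      · simp only [Category.assoc, pb_lift₁, Category.id_comp]
        rw [comp_plift]
        apply prod_ext
        · simp [hm1]
        · simp
      · simp
  have hweqa₁ : Weq (pb₁ (prodMap h h) (pst Z) (pstFib Z) ≫ pfst Y Y) := by
    have e : pb₁ (prodMap h h) (pst Z) (pstFib Z) ≫ pfst Y Y
        = pb_lift h _ hfibω (pb₁ (prodMap h h) (pst Z) (pstFib Z) ≫ pfst Y Y)
          (pb_lift (prodMap (𝟙 Z) h) (pst Z) (pstFib Z)
            (plift (pb₂ (prodMap h h) (pst Z) (pstFib Z) ≫ ps Z)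
              (pb₁ (prodMap h h) (pst Z) (pstFib Z) ≫ psnd Y Y))
            (pb₂ (prodMap h h) (pst Z) (pstFib Z)) commmV) w₃ ≫ pb₁ h _ hfibω := by
      rw [pb_lift₁]
    rw [e]
    exact weq_comp (weq_of_inv _ _ hφψ₃ hψφ₃) (pb_weq h _ hfibω hweqω)
  -- ĉ is a weak equivalence
  have hweqc : Weq (pb_lift (prodMap h h) (pst Z) (pstFib Z) (pst Y) Ph commc) := by
    refine weq_cancel_right hweqa₁ ?_
    have e : pb_lift (prodMap h h) (pst Z) (pstFib Z) (pst Y) Ph commc ≫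
        pb₁ (prodMap h h) (pst Z) (pstFib Z) ≫ pfst Y Y = ps Y := by
      rw [← Category.assoc, pb_lift₁, pst_pfst]
    rw [e]; exact weq_ps Y
  -- lift to get the homotopy inverse d on path objects
  have commd : 𝟙 (P Y) ≫ pst Y = pb_lift (prodMap h h) (pst Z) (pstFib Z) (pst Y) Ph commc ≫
      pb₁ (prodMap h h) (pst Z) (pstFib Z) := by
    rw [Category.id_comp, pb_lift₁]
  obtain ⟨d, hd, hdu⟩ := lift_strong _ (pst Y) (𝟙 (P Y)) _ hweqc (pstFib Y) commd
  -- the map T' ⟶ V induced by (a,b) and H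
  have commH : plift a b ≫ prodMap h h = H ≫ pst Z := by
    apply prod_ext <;> simp [prodMap, pst, Hs, Ht]
  have hds : d ≫ ps Y = pb₁ (prodMap h h) (pst Z) (pstFib Z) ≫ pfst Y Y := by
    rw [← pst_pfst Y, ← Category.assoc, hd]
  have hdt : d ≫ pt Y = pb₁ (prodMap h h) (pst Z) (pstFib Z) ≫ psnd Y Y := by
    rw [← pst_psnd Y, ← Category.assoc, hd]
  refine ⟨pb_lift (prodMap h h) (pst Z) (pstFib Z) (plift a b) H commH ≫ d, ?_, ?_, ?_⟩
  · rw [Category.assoc, hds, ← Category.assoc, pb_lift₁, plift_fst]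
  · rw [Category.assoc, hdt, ← Category.assoc, pb_lift₁, plift_snd]
  · -- the fiberwise homotopy (H_Y ≫ Ph) ~ H
    have s1 := fibHomotopic_push (pstFib Y) (pstFib Z) hPh hdu
    have e1 : (𝟙 (P Y)) ≫ Ph = pb_lift (prodMap h h) (pst Z) (pstFib Z) (pst Y) Ph commc ≫
        pb₂ (prodMap h h) (pst Z) (pstFib Z) := by
      rw [Category.id_comp, pb_lift₂]
    rw [e1, Category.assoc] at s1
    have hFG : (d ≫ Ph) ≫ pst Z = pb₂ (prodMap h h) (pst Z) (pstFib Z) ≫ pst Z := by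
      rw [Category.assoc, hPh, ← Category.assoc, hd, hVc]
    have s2 := fibHomotopic_extend hweqc hFG s1
    have s3 := fibHomotopic_precomp
      (pb_lift (prodMap h h) (pst Z) (pstFib Z) (plift a b) H commH) s2
    rw [pb_lift₂, ← Category.assoc] at s3
    exact s3

end PathCat

open PathCat

/-- Stability of weak/strong homotopy exponentials under weak equivalences on the
target. -/
theorem exp_stable_weq_target
    {C : Type u} [Category.{v} C] [PathCat C] (X Y Z E : C)
    (ε : prodObj E X ⟶ Y) (h : Y ⟶ Z) (hw : PathCat.Weq h) :
    (IsWeakExp X Y E ε → IsWeakExp X Z E (ε ≫ h)) ∧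
    (IsStrongExp X Y E ε → IsStrongExp X Z E (ε ≫ h)) := by
  obtain ⟨Ph, hPs, hPt, hPr⟩ := exists_pmap h
  have hW : IsWeakExp X Y E ε → IsWeakExp X Z E (ε ≫ h) := by
    intro hweak T u
    obtain ⟨M, j, q, π, γ, hjq, hjπ, hj, hq, hπ, hγs, hγt⟩ := exists_factor h
    have hqweq : Weq q := weq_cancel_left hj (by rw [hjq]; exact hw)
    obtain ⟨ς, hς⟩ := acyc_section q hq hqweq
    obtain ⟨v, K, hKs, hKt⟩ := hweak T (u ≫ ς ≫ π)
    refine ⟨v, ?_⟩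
    have hstep1 : Homotopic (prodMap v (𝟙 X) ≫ ε ≫ h) ((u ≫ ς ≫ π) ≫ h) := by
      refine ⟨K ≫ Ph, ?_, ?_⟩
      · rw [Category.assoc, hPs, ← Category.assoc, hKs, Category.assoc]
      · rw [Category.assoc, hPt, ← Category.assoc, hKt]
    have hstep2 : Homotopic ((u ≫ ς ≫ π) ≫ h) u := by
      refine ⟨u ≫ ς ≫ γ, ?_, ?_⟩
      · simp only [Category.assoc, hγs]
      · rw [Category.assoc, Category.assoc, hγt, hς, Category.comp_id]
    exact homotopic_trans hstep1 hstep2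
  refine ⟨hW, ?_⟩
  rintro ⟨hweak, hfull⟩
  refine ⟨hW hweak, ?_⟩
  intro T θ θs θt θr PεZ PεZs PεZt PεZr v v' H Hs Ht
  have hPh : Ph ≫ pst Z = pst Y ≫ prodMap h h := by
    apply prod_ext <;> simp [pst, prodMap, hPs, hPt]
  -- a filler for ε on path objects
  have commY : (ε ≫ pr Y) ≫ pst Y
      = pr (prodObj E X) ≫ plift (ps (prodObj E X) ≫ ε) (pt (prodObj E X) ≫ ε) := by
    apply prod_ext <;> simp [pst]
  obtain ⟨PεY, hPεY, hPεYr⟩ := lift_strong (pr (prodObj E X)) (pst Y) (ε ≫ pr Y)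
      (plift (ps (prodObj E X) ≫ ε) (pt (prodObj E X) ≫ ε)) (pr_weq _) (pstFib Y) commY
  have PεYs : PεY ≫ ps Y = ps (prodObj E X) ≫ ε := by
    have := congrArg (· ≫ pfst Y Y) hPεY; simpa [pst] using this
  have PεYt : PεY ≫ pt Y = pt (prodObj E X) ≫ ε := by
    have := congrArg (· ≫ psnd Y Y) hPεY; simpa [pst] using this
  -- lift the homotopy H along h
  have Hs' : H ≫ ps Z = (prodMap v (𝟙 X) ≫ ε) ≫ h := by
    rw [Hs, Category.assoc]
  have Ht' : H ≫ pt Z = (prodMap v' (𝟙 X) ≫ ε) ≫ h := by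
    rw [Ht, Category.assoc]
  obtain ⟨HY, hHYs, hHYt, hHrel⟩ := unwhisker hw hPs hPt Hs' Ht'
  obtain ⟨K, hKs, hKt, hG⟩ := hfull T θ θs θt θr PεY PεYs PεYt hPεYr v v' HY hHYs hHYt
  refine ⟨K, hKs, hKt, ?_⟩
  -- compare the two fillers P(ε ≫ h) and PεY ≫ Ph
  have hFGc : PεZ ≫ pst Z = (PεY ≫ Ph) ≫ pst Z := by
    apply prod_ext
    · simp only [Category.assoc, pst_pfst, pst_pfst_assoc]
      rw [PεZs, hPs, ← Category.assoc PεY (ps Y) h, PεYs, Category.assoc]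
    · simp only [Category.assoc, pst_psnd, pst_psnd_assoc]
      rw [PεZt, hPt, ← Category.assoc PεY (pt Y) h, PεYt, Category.assoc]
  have i1 : FibHomotopic (pst Z) (pstFib Z) (pr (prodObj E X) ≫ PεZ) (ε ≫ h ≫ pr Z) := by
    have := PεZr
    simpa only [Category.assoc] using this
  have i2 : FibHomotopic (pst Z) (pstFib Z) (ε ≫ h ≫ pr Z) (ε ≫ pr Y ≫ Ph) :=
    fibHomotopic_precomp ε (fibHomotopic_symm hPr)
  have i3 : FibHomotopic (pst Z) (pstFib Z) (ε ≫ pr Y ≫ Ph)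
      (pr (prodObj E X) ≫ PεY ≫ Ph) := by
    have := fibHomotopic_push (pstFib Y) (pstFib Z) hPh (fibHomotopic_symm hPεYr)
    simpa only [Category.assoc] using this
  have hcomp : FibHomotopic (pst Z) (pstFib Z) PεZ (PεY ≫ Ph) :=
    fibHomotopic_extend (pr_weq (prodObj E X)) hFGc
      (fibHomotopic_trans i1 (fibHomotopic_trans i2 i3))
  have c1 : FibHomotopic (pst Z) (pstFib Z)
      (plift (pfst T X ≫ K) (psnd T X ≫ pr X) ≫ θ ≫ PεZ)
      (plift (pfst T X ≫ K) (psnd T X ≫ pr X) ≫ θ ≫ PεY ≫ Ph) := by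
    have := fibHomotopic_precomp (plift (pfst T X ≫ K) (psnd T X ≫ pr X))
      (fibHomotopic_precomp θ hcomp)
    simpa only [Category.assoc] using this
  have c2 : FibHomotopic (pst Z) (pstFib Z)
      (plift (pfst T X ≫ K) (psnd T X ≫ pr X) ≫ θ ≫ PεY ≫ Ph) (HY ≫ Ph) := by
    have := fibHomotopic_push (pstFib Y) (pstFib Z) hPh hG
    simpa only [Category.assoc] using this
  exact fibHomotopic_trans c1 (fibHomotopic_trans c2 hHrel)
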